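/- Let n ≥ m ≥ 1, and let G be an edge-colored complete graph with no monochromatic S(n,m). Suppose vertex v has at least n + m + 1 incident edges of color red, with endpoints v_1, ..., v_{n+m+1}. Then each v_i has at most m incident red edges in total. -/

import Mathlib

open Finset

/-- A symmetric edge-coloring of a complete graph, given as a function on ordered
pairs of vertices. -/
def IsSymmColoring {V C : Type*} (c : V → V → C) : Prop := ∀ u v, c u v = c v u

/-- The coloring `c` contains a rainbow triangle: three vertices whose three
connecting edges get three distinct colors. -/
def HasRainbowTriangle {V C : Type*} (c : V → V → C) : Prop :=
  ∃ u v w : V, u ≠ v ∧ u ≠ w ∧ v ≠ w ∧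
    c u v ≠ c u w ∧ c u v ≠ c v w ∧ c u w ≠ c v w

/-- The coloring `c` contains a monochromatic triangle. -/
def HasMonoTriangle {V C : Type*} (c : V → V → C) : Prop :=
  ∃ u v w : V, u ≠ v ∧ u ≠ w ∧ v ≠ w ∧ c u v = c u w ∧ c u v = c v w

/-- The coloring `c` contains a monochromatic copy of the double star `S(n,m)`:
two adjacent centers `u, v`, a set `A` of `n` further leaves at `u` and a set `B`
of `m` further leaves at `v`, all edges in one color. -/
def HasMonoDoubleStar {V C : Type*} (c : V → V → C) (n m : ℕ) : Prop :=
  ∃ (u v : V) (A B : Finset V) (col : C),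
    u ≠ v ∧ A.card = n ∧ B.card = m ∧ Disjoint A B ∧
    u ∉ A ∧ u ∉ B ∧ v ∉ A ∧ v ∉ B ∧
    c u v = col ∧ (∀ a ∈ A, c u a = col) ∧ (∀ b ∈ B, c v b = col)

/-- Every `k`-edge-coloring of the complete graph on `N` vertices contains a
rainbow triangle or a monochromatic `S(n,m)` (so `gr_k(K_3 : S(n,m)) ≤ N`). -/
def grHolds (k n m N : ℕ) : Prop :=
  ∀ c : Fin N → Fin N → Fin k, IsSymmColoring c →
    HasRainbowTriangle c ∨ HasMonoDoubleStar c n m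

/-- There is a `k`-edge-coloring of the complete graph on `N` vertices with no
rainbow triangle and no monochromatic `S(n,m)` (so `gr_k(K_3 : S(n,m)) > N`). -/
def grAvoid (k n m N : ℕ) : Prop :=
  ∃ c : Fin N → Fin N → Fin k, IsSymmColoring c ∧
    ¬ HasRainbowTriangle c ∧ ¬ HasMonoDoubleStar c n m

/-- In a complete graph with no monochromatic `S(n,m)`, if `v` has at least
`n+m+1` red neighbors `A`, then each vertex of `A` has at most `m` incident red
edges in total. -/
theorem stmt_17 {V : Type*} [Fintype V] [DecidableEq V] {k n m : ℕ}
    (hm : 1 ≤ m) (hmn : m ≤ n)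
    (c : V → V → Fin k) (hsym : IsSymmColoring c) (hmono : ¬ HasMonoDoubleStar c n m)
    (red : Fin k) (v : V) (A : Finset V) (hvA : v ∉ A)
    (hA : n + m + 1 ≤ A.card) (hred : ∀ a ∈ A, c v a = red) :
    ∀ a ∈ A, (univ.filter (fun w => w ≠ a ∧ c a w = red)).card ≤ m := by
  intro a ha
  by_contra hcon
  push_neg at hcon
  set R := univ.filter (fun w => w ≠ a ∧ c a w = red) with hR
  have hRv : m ≤ (R \ {v}).card := by
    have h1 : R.card - 1 ≤ (R \ {v}).card := by
      calc R.card - 1 ≤ R.card - ({v} : Finset V).card := by simp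
        _ ≤ (R \ {v}).card := Finset.le_card_sdiff _ _
    omega
  obtain ⟨B, hBsub, hBcard⟩ := Finset.exists_subset_card_eq hRv
  have hBA : ∀ b ∈ B, b ≠ a ∧ c a b = red := by
    intro b hb
    have := hBsub hb
    rw [Finset.mem_sdiff, hR, Finset.mem_filter] at this
    exact this.1.2
  have hvB : v ∉ B := by
    intro hv
    have := hBsub hv
    simp [Finset.mem_sdiff] at this
  have hAcard : n ≤ (A \ insert a B).card := by
    have h2 : (insert a B).card ≤ m + 1 := by
      calc (insert a B).card ≤ B.card + 1 := Finset.card_insert_le _ _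
        _ = m + 1 := by rw [hBcard]
    have := Finset.le_card_sdiff (insert a B) A
    omega
  obtain ⟨A', hA'sub, hA'card⟩ := Finset.exists_subset_card_eq hAcard
  have hA'A : ∀ x ∈ A', x ∈ A ∧ x ≠ a ∧ x ∉ B := by
    intro x hx
    have := hA'sub hx
    rw [Finset.mem_sdiff, Finset.mem_insert] at this
    exact ⟨this.1, fun h => this.2 (Or.inl h), fun h => this.2 (Or.inr h)⟩
  apply hmono
  refine ⟨v, a, A', B, red, ?_, hA'card, hBcard, ?_, ?_, hvB, ?_, ?_, hred a ha, ?_, ?_⟩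
  · intro h; exact hvA (h ▸ ha)
  · rw [Finset.disjoint_left]; intro x hx; exact (hA'A x hx).2.2
  · intro h; exact hvA (hA'A v h).1
  · intro h; exact (hA'A a h).2.1 rfl
  · intro h; exact (hBA a h).1 rfl
  · intro x hx; exact hred x (hA'A x hx).1
  · intro b hb; exact (hBA b hb).2
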